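/- Plünnecke's inequality μ_h(G) ≤ μ_1(G)^h for commutative layered graphs follows from the bound μ_h(H) ≤ (μ_1(H)/h)^h for square commutative hypercube graphs, via the construction H with U_I = V_{|I|} and edges inherited from G; this H is square commutative with μ_h(H) = μ_h(G) and μ_1(H) = h·μ_1(G). -/

import Mathlib

open Pointwise Finset

/-- A hypercube graph indexed by the subsets of `{1, …, h}` (modelled as `Finset (Fin h)`):
a directed graph whose vertices carry an index set, with edges only adding one index. -/
structure HypercubeGraph (h : ℕ) (V : Type*) where
  verts : Finset V
  idx : V → Finset (Fin h)
  Edge : V → V → Prop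
  edge_mem_left : ∀ u v, Edge u v → u ∈ verts
  edge_mem_right : ∀ u v, Edge u v → v ∈ verts
  edge_step : ∀ u v, Edge u v → ∃ i ∉ idx u, idx v = insert i (idx u)

namespace HypercubeGraph

variable {h : ℕ} {V V₁ V₂ : Type*}

/-- `I → I'` in `Q_h`: `I'` is obtained from `I` by adding one index. -/
def Step (I I' : Finset (Fin h)) : Prop := ∃ i ∉ I, I' = insert i I

/-- Square commutativity: directed squares can be completed through the associate
index class `I ∪ (I'' \ I')`, with distinct intermediate vertices. -/
def SquareComm (G : HypercubeGraph h V) : Prop :=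
  (∀ I I' I'' : Finset (Fin h), Step I I' → Step I' I'' →
    ∀ v v', G.idx v = I → G.idx v' = I' → G.Edge v v' →
    ∀ S : Finset V, (∀ w ∈ S, G.idx w = I'' ∧ G.Edge v' w) →
    ∃ f : V → V, Set.InjOn f ↑S ∧
      ∀ w ∈ S, G.idx (f w) = I ∪ (I'' \ I') ∧ G.Edge v (f w) ∧ G.Edge (f w) w) ∧
  (∀ I I' I'' : Finset (Fin h), Step I I' → Step I' I'' →
    ∀ v' v'', G.idx v' = I' → G.idx v'' = I'' → G.Edge v' v'' →
    ∀ S : Finset V, (∀ w ∈ S, G.idx w = I ∧ G.Edge w v') →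
    ∃ f : V → V, Set.InjOn f ↑S ∧
      ∀ w ∈ S, G.idx (f w) = I ∪ (I'' \ I') ∧ G.Edge w (f w) ∧ G.Edge (f w) v'')

open Classical in
/-- The image of `Z` in the vertex class `U_I`: vertices of index `I` reachable from `Z`. -/
noncomputable def ImU (G : HypercubeGraph h V) (Z : Finset V) (I : Finset (Fin h)) : Finset V :=
  G.verts.filter fun v => G.idx v = I ∧ ∃ z ∈ Z, Relation.ReflTransGen G.Edge z v

open Classical in
/-- The image of `Z` in the `i`-th layer `V_i = ⊎_{|I| = i} U_I`. -/
noncomputable def ImL (G : HypercubeGraph h V) (Z : Finset V) (i : ℕ) : Finset V :=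
  G.verts.filter fun v => (G.idx v).card = i ∧ ∃ z ∈ Z, Relation.ReflTransGen G.Edge z v

open Classical in
/-- The bottom layer `V_0 = U_∅`. -/
noncomputable def bottom (G : HypercubeGraph h V) : Finset V :=
  G.verts.filter fun v => G.idx v = ∅

/-- The `i`-th magnification ratio `μ_i(G)`. -/
noncomputable def mu (G : HypercubeGraph h V) (i : ℕ) : ℝ :=
  sInf { r : ℝ | ∃ Z : Finset V, Z.Nonempty ∧ Z ⊆ G.bottom ∧
    r = ((G.ImL Z i).card : ℝ) / (Z.card : ℝ) }

/-- The hypercube product of two `Q_h`-hypercube graphs. -/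
def prod (G₁ : HypercubeGraph h V₁) (G₂ : HypercubeGraph h V₂) :
    HypercubeGraph h (V₁ × V₂) where
  verts := (G₁.verts ×ˢ G₂.verts).filter fun p => G₁.idx p.1 = G₂.idx p.2
  idx p := G₁.idx p.1
  Edge p q := G₁.idx p.1 = G₂.idx p.2 ∧ G₁.idx q.1 = G₂.idx q.2 ∧
    G₁.Edge p.1 q.1 ∧ G₂.Edge p.2 q.2
  edge_mem_left := by
    rintro p q ⟨h1, h2, h3, h4⟩
    simp only [Finset.mem_filter, Finset.mem_product]
    exact ⟨⟨G₁.edge_mem_left _ _ h3, G₂.edge_mem_left _ _ h4⟩, h1⟩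
  edge_mem_right := by
    rintro p q ⟨h1, h2, h3, h4⟩
    simp only [Finset.mem_filter, Finset.mem_product]
    exact ⟨⟨G₁.edge_mem_right _ _ h3, G₂.edge_mem_right _ _ h4⟩, h2⟩
  edge_step := by
    rintro p q ⟨h1, h2, h3, h4⟩
    exact G₁.edge_step _ _ h3

/-- Isomorphism of hypercube graphs: an index- and edge-preserving bijection on vertices. -/
def Isomorphic (G : HypercubeGraph h V₁) (G' : HypercubeGraph h V₂) : Prop :=
  ∃ f : V₁ → V₂, Set.BijOn f ↑G.verts ↑G'.verts ∧
    (∀ v ∈ G.verts, G'.idx (f v) = G.idx v) ∧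
    (∀ u v : V₁, G.Edge u v ↔ G'.Edge (f u) (f v))

end HypercubeGraph

/-- The addition graph `G₊(A, B₁, …, B_h)`: vertex classes `U_I = A + ∑_{i ∈ I} B_i`
(in disjoint copies of the group), with edges `x → x + b` for `b ∈ B_i`. -/
def additionGraph {G : Type*} [AddCommGroup G] [DecidableEq G] (h : ℕ)
    (A : Finset G) (B : Fin h → Finset G) :
    HypercubeGraph h (Finset (Fin h) × G) where
  verts := (Finset.univ : Finset (Finset (Fin h))).biUnion fun I =>
    (A + ∑ i ∈ I, B i).image fun x => (I, x)
  idx p := p.1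
  Edge p q := p.2 ∈ A + ∑ i ∈ p.1, B i ∧
    ∃ i ∉ p.1, q.1 = insert i p.1 ∧ ∃ b ∈ B i, q.2 = p.2 + b
  edge_mem_left := by
    rintro ⟨I, x⟩ ⟨J, y⟩ ⟨hx, i, hi, rfl, b, hb, rfl⟩
    simp only [Finset.mem_biUnion, Finset.mem_univ, Finset.mem_image, true_and]
    exact ⟨I, x, hx, rfl⟩
  edge_mem_right := by
    rintro ⟨I, x⟩ ⟨J, y⟩ ⟨hx, i, hi, rfl, b, hb, rfl⟩
    simp only [Finset.mem_biUnion, Finset.mem_univ, Finset.mem_image, true_and]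
    refine ⟨insert i I, x + b, ?_, rfl⟩
    rw [Finset.sum_insert hi]
    have : A + (B i + ∑ j ∈ I, B j) = (A + ∑ j ∈ I, B j) + B i := by
      rw [add_comm (B i), ← add_assoc]
    rw [this]
    exact Finset.add_mem_add hx hb
  edge_step := by
    rintro ⟨I, x⟩ ⟨J, y⟩ ⟨hx, i, hi, rfl, b, hb, rfl⟩
    exact ⟨i, hi, rfl⟩


/-- A Plünnecke-commutative layered graph with layers `V_0, …, V_h`. -/
structure LayeredGraph (h : ℕ) (V : Type*) where
  verts : Finset V
  layer : V → ℕ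
  layer_le : ∀ v ∈ verts, layer v ≤ h
  Edge : V → V → Prop
  edge_mem_left : ∀ u v, Edge u v → u ∈ verts
  edge_mem_right : ∀ u v, Edge u v → v ∈ verts
  edge_step : ∀ u v, Edge u v → layer v = layer u + 1

namespace LayeredGraph

variable {h : ℕ} {V : Type*}

/-- Plünnecke commutativity for layered graphs. -/
def PlunneckeComm (G : LayeredGraph h V) : Prop :=
  (∀ v v', G.Edge v v' → ∀ S : Finset V, (∀ w ∈ S, G.Edge v' w) →
    ∃ f : V → V, Set.InjOn f ↑S ∧ ∀ w ∈ S, G.Edge v (f w) ∧ G.Edge (f w) w) ∧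
  (∀ v' v'', G.Edge v' v'' → ∀ S : Finset V, (∀ w ∈ S, G.Edge w v') →
    ∃ f : V → V, Set.InjOn f ↑S ∧ ∀ w ∈ S, G.Edge w (f w) ∧ G.Edge (f w) v'')

open Classical in
/-- The image of `Z` in layer `i`: vertices of layer `i` reachable from `Z`. -/
noncomputable def Im (G : LayeredGraph h V) (Z : Finset V) (i : ℕ) : Finset V :=
  G.verts.filter fun v => G.layer v = i ∧ ∃ z ∈ Z, Relation.ReflTransGen G.Edge z v

open Classical in
/-- The bottom layer of a layered graph. -/
noncomputable def bottom (G : LayeredGraph h V) : Finset V :=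
  G.verts.filter fun v => G.layer v = 0

/-- The `i`-th magnification ratio of a layered graph. -/
noncomputable def mu (G : LayeredGraph h V) (i : ℕ) : ℝ :=
  sInf { r : ℝ | ∃ Z : Finset V, Z.Nonempty ∧ Z ⊆ G.bottom ∧
    r = ((G.Im Z i).card : ℝ) / (Z.card : ℝ) }

/-- The `Q_h`-hypercube graph `H` with `U_I` a copy of `V_{|I|}` and edges inherited
from the layered graph `G`. -/
def toHypercube [DecidableEq V] (G : LayeredGraph h V) : HypercubeGraph h (Finset (Fin h) × V) where
  verts := (Finset.univ : Finset (Finset (Fin h))).biUnion fun I =>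
    (G.verts.filter fun v => G.layer v = I.card).image fun v => (I, v)
  idx p := p.1
  Edge p q := G.layer p.2 = p.1.card ∧ (∃ i ∉ p.1, q.1 = insert i p.1) ∧ G.Edge p.2 q.2
  edge_mem_left := by
    rintro ⟨I, x⟩ ⟨J, y⟩ ⟨hl, ⟨i, hi, rfl⟩, he⟩
    simp only [Finset.mem_biUnion, Finset.mem_univ, Finset.mem_image,
      Finset.mem_filter, true_and]
    exact ⟨I, x, ⟨G.edge_mem_left _ _ he, hl⟩, rfl⟩
  edge_mem_right := by
    rintro ⟨I, x⟩ ⟨J, y⟩ ⟨hl, ⟨i, hi, rfl⟩, he⟩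
    simp only [Finset.mem_biUnion, Finset.mem_univ, Finset.mem_image,
      Finset.mem_filter, true_and]
    refine ⟨insert i I, y, ⟨G.edge_mem_right _ _ he, ?_⟩, rfl⟩
    rw [G.edge_step _ _ he, hl, Finset.card_insert_of_notMem hi]
  edge_step := by
    rintro ⟨I, x⟩ ⟨J, y⟩ ⟨hl, ⟨i, hi, rfl⟩, he⟩
    exact ⟨i, hi, rfl⟩

end LayeredGraph

section Aux

namespace LayeredGraph

variable {h : ℕ} {V : Type} [DecidableEq V] (G : LayeredGraph h V)

lemma mem_toHypercube_verts (p : Finset (Fin h) × V) :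
    p ∈ G.toHypercube.verts ↔ p.2 ∈ G.verts ∧ G.layer p.2 = p.1.card := by
  obtain ⟨I, v⟩ := p
  simp only [toHypercube, Finset.mem_biUnion, Finset.mem_univ, Finset.mem_image,
    Finset.mem_filter, true_and, Prod.mk.injEq]
  constructor
  · rintro ⟨J, w, ⟨hw, hl⟩, rfl, rfl⟩; exact ⟨hw, hl⟩
  · rintro ⟨hw, hl⟩; exact ⟨I, v, ⟨hw, hl⟩, rfl, rfl⟩

omit [DecidableEq V] in
lemma layer_le_of_reach {a b : V} (hab : Relation.ReflTransGen G.Edge a b) :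
    G.layer a ≤ G.layer b := by
  induction hab with
  | refl => exact le_refl _
  | @tail b c hab e ih => have := G.edge_step b c e; omega

lemma proj_reach {p q : Finset (Fin h) × V}
    (hpq : Relation.ReflTransGen G.toHypercube.Edge p q) :
    Relation.ReflTransGen G.Edge p.2 q.2 := by
  induction hpq with
  | refl => exact .refl
  | @tail b c hpq e ih => exact ih.tail e.2.2

lemma lift_reach {z w : V} (hzw : Relation.ReflTransGen G.Edge z w) :
    ∀ I₀ I : Finset (Fin h), I₀ ⊆ I → G.layer z = I₀.card → G.layer w = I.card →
      Relation.ReflTransGen G.toHypercube.Edge (I₀, z) (I, w) := by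
  induction hzw using Relation.ReflTransGen.head_induction_on with
  | refl =>
    intro I₀ I hsub h0 h1
    have : I₀ = I := Finset.eq_of_subset_of_card_le hsub (by omega)
    subst this; exact .refl
  | @head a c e tl ih =>
    intro I₀ I hsub h0 h1
    have hc : G.layer c = I₀.card + 1 := by rw [G.edge_step _ _ e, h0]
    have hcw : G.layer c ≤ G.layer w := G.layer_le_of_reach tl
    have hcard : I₀.card < I.card := by omega
    have hns : ¬ I ⊆ I₀ := fun hI => by have := Finset.card_le_card hI; omega
    obtain ⟨i, hiI, hiI₀⟩ := Finset.not_subset.mp hns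
    have step : G.toHypercube.Edge (I₀, a) (insert i I₀, c) :=
      ⟨h0, ⟨i, hiI₀, rfl⟩, e⟩
    exact (ih (insert i I₀) I (Finset.insert_subset hiI hsub)
      (by rw [hc, Finset.card_insert_of_notMem hiI₀]) h1).head step

lemma mem_toHypercube_bottom (p : Finset (Fin h) × V) :
    p ∈ G.toHypercube.bottom ↔ p.1 = ∅ ∧ p.2 ∈ G.bottom := by
  simp only [HypercubeGraph.bottom, Finset.mem_filter, mem_toHypercube_verts, bottom]
  constructor
  · rintro ⟨⟨hv, hl⟩, he⟩
    refine ⟨he, hv, ?_⟩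
    rw [hl, show p.1 = ∅ from he, Finset.card_empty]
  · rintro ⟨he, hv, hl⟩
    exact ⟨⟨hv, by rw [hl, he, Finset.card_empty]⟩, he⟩

lemma ImL_toHypercube (Z : Finset (Finset (Fin h) × V)) (hZ : Z ⊆ G.toHypercube.bottom)
    (i : ℕ) :
    G.toHypercube.ImL Z i =
      (Finset.powersetCard i Finset.univ) ×ˢ (G.Im (Z.image Prod.snd) i) := by
  ext ⟨I, w⟩
  simp only [HypercubeGraph.ImL, Finset.mem_filter, Finset.mem_product,
    Finset.mem_powersetCard, Finset.mem_image, Im, mem_toHypercube_verts]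
  constructor
  · rintro ⟨⟨hv, hl⟩, hcard, z, hz, hreach⟩
    refine ⟨⟨Finset.subset_univ _, hcard⟩, hv, by rw [hl]; exact hcard,
      z.2, ⟨z, hz, rfl⟩, ?_⟩
    exact G.proj_reach hreach
  · rintro ⟨⟨-, hcard⟩, hv, hl, z, ⟨p, hp, rfl⟩, hreach⟩
    obtain ⟨hp1, hpb⟩ := (G.mem_toHypercube_bottom p).mp (hZ hp)
    simp only [bottom, Finset.mem_filter] at hpb
    refine ⟨⟨hv, by rw [hl, hcard]⟩, hcard, p, hp, ?_⟩
    have := G.lift_reach hreach ∅ I (Finset.empty_subset _)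
      (by rw [hpb.2, Finset.card_empty]) (by rw [hl, hcard])
    rwa [← hp1, Prod.mk.eta] at this

lemma mu_toHypercube (i : ℕ) :
    G.toHypercube.mu i = (h.choose i : ℝ) * G.mu i := by
  have key : { r : ℝ | ∃ Z : Finset (Finset (Fin h) × V), Z.Nonempty ∧
        Z ⊆ G.toHypercube.bottom ∧
        r = ((G.toHypercube.ImL Z i).card : ℝ) / (Z.card : ℝ) } =
      (fun r => (h.choose i : ℝ) * r) ''
      { r : ℝ | ∃ Z : Finset V, Z.Nonempty ∧ Z ⊆ G.bottom ∧
        r = ((G.Im Z i).card : ℝ) / (Z.card : ℝ) } := by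
    ext r
    simp only [Set.mem_setOf_eq, Set.mem_image]
    constructor
    · rintro ⟨Z, hne, hZb, rfl⟩
      have hinj : Set.InjOn (Prod.snd : Finset (Fin h) × V → V) ↑Z := by
        intro p hp q hq hpq
        have h1 := ((G.mem_toHypercube_bottom p).mp (hZb hp)).1
        have h2 := ((G.mem_toHypercube_bottom q).mp (hZb hq)).1
        exact Prod.ext (h1.trans h2.symm) hpq
      have hcard : (Z.image Prod.snd).card = Z.card := Finset.card_image_of_injOn hinj
      refine ⟨((G.Im (Z.image Prod.snd) i).card : ℝ) / ((Z.image Prod.snd).card : ℝ),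
        ⟨Z.image Prod.snd, hne.image _, ?_, rfl⟩, ?_⟩
      · intro z hz
        obtain ⟨p, hp, rfl⟩ := Finset.mem_image.mp hz
        exact ((G.mem_toHypercube_bottom p).mp (hZb hp)).2
      · rw [G.ImL_toHypercube Z hZb i, Finset.card_product, Finset.card_powersetCard,
          Finset.card_univ, Fintype.card_fin, hcard]
        push_cast
        try ring
    · rintro ⟨r', ⟨Z', hne, hZb, rfl⟩, rfl⟩
      set Z : Finset (Finset (Fin h) × V) :=
        Z'.image (fun z => ((∅ : Finset (Fin h)), z)) with hZdef
      have hZimage : Z.image Prod.snd = Z' := by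
        rw [hZdef, Finset.image_image]; exact Finset.image_id
      have hZb' : Z ⊆ G.toHypercube.bottom := by
        intro p hp
        obtain ⟨z, hz, rfl⟩ := Finset.mem_image.mp hp
        exact (G.mem_toHypercube_bottom _).mpr ⟨rfl, hZb hz⟩
      have hcard : Z.card = Z'.card :=
        Finset.card_image_of_injective _ (fun a b hab => by simpa using hab)
      refine ⟨Z, hne.image _, hZb', ?_⟩
      rw [G.ImL_toHypercube Z hZb' i, Finset.card_product, Finset.card_powersetCard,
        Finset.card_univ, Fintype.card_fin, hZimage, hcard]
      push_cast
      try ring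
  rw [HypercubeGraph.mu, mu, key, ← smul_eq_mul,
    ← Real.sInf_smul_of_nonneg (by positivity)]
  congr 1

lemma toHypercube_squareComm (hG : G.PlunneckeComm) : G.toHypercube.SquareComm := by
  constructor
  · rintro I I' I'' ⟨i, hi, rfl⟩ ⟨j, hj, rfl⟩ ⟨vI, vx⟩ ⟨v'I, v'x⟩ hvI hv'I hvv' S hS
    have hv1 : I = vI := hvI.symm
    subst hv1
    have hjI : j ∉ I := fun hjI => hj (Finset.mem_insert_of_mem hjI)
    have hij : i ≠ j := fun hij => hj (hij ▸ Finset.mem_insert_self i I)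
    have hUeq : I ∪ (insert j (insert i I) \ insert i I) = insert j I := by
      rw [Finset.insert_sdiff_cancel hj, Finset.union_comm, ← Finset.insert_eq]
    obtain ⟨f₀, hf₀inj, hf₀⟩ := hG.1 vx v'x hvv'.2.2 (S.image Prod.snd) (by
      rintro y hy
      obtain ⟨w, hw, rfl⟩ := Finset.mem_image.mp hy
      exact (hS w hw).2.2.2)
    refine ⟨fun w => (insert j I, f₀ w.2), ?_, ?_⟩
    · intro a ha b hb hab
      have h2 : f₀ a.2 = f₀ b.2 := congrArg Prod.snd hab
      have := hf₀inj (Finset.mem_coe.mpr (Finset.mem_image_of_mem Prod.snd ha))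
        (Finset.mem_coe.mpr (Finset.mem_image_of_mem Prod.snd hb)) h2
      have ha1 : a.1 = insert j (insert i I) := (hS a ha).1
      have hb1 : b.1 = insert j (insert i I) := (hS b hb).1
      exact Prod.ext (ha1.trans hb1.symm) this
    · intro w hw
      have hmem : w.2 ∈ S.image Prod.snd := Finset.mem_image_of_mem Prod.snd hw
      obtain ⟨he1, he2⟩ := hf₀ w.2 hmem
      have hw1 : w.1 = insert j (insert i I) := (hS w hw).1
      refine ⟨hUeq.symm, ⟨hvv'.1, ⟨j, hjI, rfl⟩, he1⟩, ?_, ⟨i, ?_, ?_⟩, he2⟩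
      · show G.layer (f₀ w.2) = (insert j I).card
        rw [G.edge_step _ _ he1, hvv'.1, Finset.card_insert_of_notMem hjI]
      · simp only [Finset.mem_insert, not_or]
        exact ⟨hij, hi⟩
      · exact hw1.trans (Finset.insert_comm j i I)
  · rintro I I' I'' ⟨i, hi, rfl⟩ ⟨j, hj, rfl⟩ ⟨v'I, v'x⟩ ⟨v''I, v''x⟩ hv'I hv''I hvv' S hS
    obtain rfl : v'I = insert i I := hv'I
    obtain rfl : v''I = insert j (insert i I) := hv''I
    have hjI : j ∉ I := fun hjI => hj (Finset.mem_insert_of_mem hjI)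
    have hij : i ≠ j := fun hij => hj (hij ▸ Finset.mem_insert_self i I)
    have hUeq : I ∪ (insert j (insert i I) \ insert i I) = insert j I := by
      rw [Finset.insert_sdiff_cancel hj, Finset.union_comm, ← Finset.insert_eq]
    obtain ⟨f₀, hf₀inj, hf₀⟩ := hG.2 v'x v''x hvv'.2.2 (S.image Prod.snd) (by
      rintro y hy
      obtain ⟨w, hw, rfl⟩ := Finset.mem_image.mp hy
      exact (hS w hw).2.2.2)
    refine ⟨fun w => (insert j I, f₀ w.2), ?_, ?_⟩
    · intro a ha b hb hab
      have h2 : f₀ a.2 = f₀ b.2 := congrArg Prod.snd hab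
      have := hf₀inj (Finset.mem_coe.mpr (Finset.mem_image_of_mem Prod.snd ha))
        (Finset.mem_coe.mpr (Finset.mem_image_of_mem Prod.snd hb)) h2
      have ha1 : a.1 = I := (hS a ha).1
      have hb1 : b.1 = I := (hS b hb).1
      exact Prod.ext (ha1.trans hb1.symm) this
    · intro w hw
      have hmem : w.2 ∈ S.image Prod.snd := Finset.mem_image_of_mem Prod.snd hw
      obtain ⟨he1, he2⟩ := hf₀ w.2 hmem
      have hw1 : w.1 = I := (hS w hw).1
      have hlw : G.layer w.2 = I.card := by
        have := (hS w hw).2.1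
        rwa [hw1] at this
      refine ⟨hUeq.symm, ⟨(hS w hw).2.1, ⟨j, ?_, ?_⟩, he1⟩, ?_, ⟨i, ?_, ?_⟩, he2⟩
      · rw [hw1]; exact hjI
      · rw [hw1]
      · show G.layer (f₀ w.2) = (insert j I).card
        rw [G.edge_step _ _ he1, hlw, Finset.card_insert_of_notMem hjI]
      · simp only [Finset.mem_insert, not_or]
        exact ⟨hij, hi⟩
      · exact Finset.insert_comm j i I

end LayeredGraph

end Aux

/-- Plünnecke's inequality `μ_h(G) ≤ μ_1(G)^h` for commutative layered graphs follows
from the bound for square commutative hypercube graphs via the construction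
`H = G.toHypercube`, which is square commutative and satisfies `μ_h(H) = μ_h(G)` and
`μ_1(H) = h·μ_1(G)`. -/
theorem plunnecke_from_hypercube {V : Type} [DecidableEq V] (h : ℕ) (hh : 0 < h)
    (G : LayeredGraph h V) (hG : G.PlunneckeComm) (hb : G.bottom.Nonempty)
    (hsq : ∀ (W : Type) (H : HypercubeGraph h (Finset (Fin h) × W)),
      H.SquareComm → H.bottom.Nonempty → H.mu h ≤ (H.mu 1 / h) ^ h) :
    G.toHypercube.SquareComm ∧
    G.toHypercube.mu h = G.mu h ∧
    G.toHypercube.mu 1 = h * G.mu 1 ∧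
    G.mu h ≤ (G.mu 1) ^ h := by
  have hsc := G.toHypercube_squareComm hG
  have hmuh : G.toHypercube.mu h = G.mu h := by
    rw [G.mu_toHypercube h, Nat.choose_self]; simp
  have hmu1 : G.toHypercube.mu 1 = h * G.mu 1 := by
    rw [G.mu_toHypercube 1, Nat.choose_one_right]
  refine ⟨hsc, hmuh, hmu1, ?_⟩
  have hbn : G.toHypercube.bottom.Nonempty := by
    obtain ⟨z, hz⟩ := hb
    exact ⟨(∅, z), (G.mem_toHypercube_bottom _).mpr ⟨rfl, hz⟩⟩
  have hkey := hsq V G.toHypercube hsc hbn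
  rw [hmuh, hmu1] at hkey
  have hh' : (h : ℝ) ≠ 0 := Nat.cast_ne_zero.mpr hh.ne'
  rwa [mul_comm, mul_div_assoc, div_self hh', mul_one] at hkey
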